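/- If Ũ₃₁ Σ_k = E₃₁ Ṽ₁₁ + E₃₂ Ṽ₂₁ + E₃₃ Ṽ₃₁ and Ũ₃₁* E₃₃ = Σ_k Ṽ₃₁*, where [Ṽ₁₁; Ṽ₂₁] has spectral norm at most 1, Σ_k is diagonal with smallest entry σ_k > ‖E₃₃‖₂, then for every unitarily invariant norm ⦀·⦀: ⦀Ũ₃₁⦀ ≤ ⦀[E₃₁, E₃₂]⦀ / Γ₁, with Γ₁ = (σ_k² − ‖E₃₃‖₂²)/σ_k. -/

import Mathlib

open Matrix

noncomputable def eigval {n : Type} [Fintype n] [DecidableEq n] {M : Matrix n n ℂ}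
    (hM : M.IsHermitian) (j : ℕ) : ℝ :=
  ((Multiset.map hM.eigenvalues Finset.univ.val).sort (· ≤ ·)).getD (Fintype.card n - j) 0

noncomputable def singval {m n : Type} [Fintype m] [Fintype n] [DecidableEq n]
    (M : Matrix m n ℂ) (j : ℕ) : ℝ :=
  Real.sqrt (eigval (Matrix.isHermitian_conjTranspose_mul_self M) j)



lemma eigval_spec {n : Type} [Fintype n] [DecidableEq n] {M : Matrix n n ℂ}
    (hM : M.IsHermitian) (hn : Nonempty n) :
    (∃ i, eigval hM 1 = hM.eigenvalues i) ∧ ∀ i, hM.eigenvalues i ≤ eigval hM 1 := by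
  classical
  set s : Multiset ℝ := Multiset.map hM.eigenvalues Finset.univ.val with hs
  set l : List ℝ := s.sort (· ≤ ·) with hl
  have hlen : l.length = Fintype.card n := by
    rw [hl, Multiset.length_sort, hs, Multiset.card_map]; rfl
  have hpos : 0 < Fintype.card n := Fintype.card_pos
  have hidx : Fintype.card n - 1 < l.length := by omega
  have heig : eigval hM 1 = l[Fintype.card n - 1] := List.getD_eq_getElem l 0 hidx
  constructor
  · have hmem : l[Fintype.card n - 1] ∈ l := List.getElem_mem _
    have : l[Fintype.card n - 1] ∈ s := by
      rwa [← Multiset.mem_sort (· ≤ ·), ← hl]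
    obtain ⟨i, -, hi⟩ := Multiset.mem_map.mp this
    exact ⟨i, by rw [heig, hi]⟩
  · intro i
    have hmem : hM.eigenvalues i ∈ l := by
      rw [hl, Multiset.mem_sort, hs]
      exact Multiset.mem_map_of_mem _ (Finset.mem_univ_val i)
    obtain ⟨j, hj, hjv⟩ := List.mem_iff_getElem.mp hmem
    rw [heig, ← hjv]
    have hsorted : l.Pairwise (· ≤ ·) := Multiset.pairwise_sort _ _
    exact hsorted.rel_get_of_le (a := ⟨j, hj⟩) (b := ⟨Fintype.card n - 1, hidx⟩) (by simp; omega)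

lemma eigval_empty {n : Type} [Fintype n] [DecidableEq n] {M : Matrix n n ℂ}
    (hM : M.IsHermitian) (hn : IsEmpty n) (j : ℕ) : eigval hM j = 0 := by
  classical
  have : (Multiset.map hM.eigenvalues Finset.univ.val) = 0 := by simp
  simp [eigval, this]

lemma eigval_congr {n : Type} [Fintype n] [DecidableEq n] {M₁ M₂ : Matrix n n ℂ}
    (h : M₁ = M₂) (h1 : M₁.IsHermitian) (h2 : M₂.IsHermitian) (j : ℕ) :
    eigval h1 j = eigval h2 j := by subst h; rfl

lemma dot_star_self_re {n : Type} [Fintype n] (v : n → ℂ) :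
    (star v ⬝ᵥ v).re = ∑ i, Complex.normSq (v i) := by
  simp [dotProduct, Complex.re_sum, Pi.star_apply, ← Complex.normSq_eq_conj_mul_self]

lemma dot_star_self_re_nonneg {n : Type} [Fintype n] (v : n → ℂ) :
    0 ≤ (star v ⬝ᵥ v).re := by
  rw [dot_star_self_re]
  exact Finset.sum_nonneg fun i _ => Complex.normSq_nonneg _

lemma dot_star_self_re_pos {n : Type} [Fintype n] {v : n → ℂ} (hv : v ≠ 0) :
    0 < (star v ⬝ᵥ v).re := by
  rw [dot_star_self_re]
  obtain ⟨i, hi⟩ := Function.ne_iff.mp hv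
  exact Finset.sum_pos' (fun i _ => Complex.normSq_nonneg _)
    ⟨i, Finset.mem_univ i, by simpa [Complex.normSq_pos] using hi⟩

lemma rayleigh_upper {n : Type} [Fintype n] [DecidableEq n] {H : Matrix n n ℂ}
    (hH : H.IsHermitian) {c : ℝ} (hc : ∀ i, hH.eigenvalues i ≤ c)
    (w : n → ℂ) :
    (star w ⬝ᵥ (H *ᵥ w)).re ≤ c * (star w ⬝ᵥ w).re := by
  classical
  set U : Matrix n n ℂ := (hH.eigenvectorUnitary : Matrix n n ℂ) with hU
  set y : n → ℂ := star U *ᵥ w with hy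
  have hUy : star w ᵥ* U = star y := by
    rw [hy, star_mulVec, star_eq_conjTranspose, conjTranspose_conjTranspose]
  have hkey : star w ⬝ᵥ (H *ᵥ w)
      = star y ⬝ᵥ ((Matrix.diagonal (RCLike.ofReal ∘ hH.eigenvalues)) *ᵥ y) := by
    conv_lhs => rw [hH.spectral_theorem]
    rw [Unitary.conjStarAlgAut_apply, ← mulVec_mulVec, ← mulVec_mulVec, dotProduct_mulVec, hUy, hy]
  have hyy : star y ⬝ᵥ y = star w ⬝ᵥ w := by
    have h1 : U * Uᴴ = 1 := by
      rw [← star_eq_conjTranspose]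
      exact Matrix.mem_unitaryGroup_iff.mp hH.eigenvectorUnitary.2
    rw [hy, dotProduct_mulVec, star_mulVec, star_eq_conjTranspose,
      conjTranspose_conjTranspose, vecMul_vecMul, h1, vecMul_one]
  have hdiag : (star y ⬝ᵥ ((Matrix.diagonal (RCLike.ofReal ∘ hH.eigenvalues)) *ᵥ y)).re
      = ∑ i, hH.eigenvalues i * Complex.normSq (y i) := by
    simp only [dotProduct, mulVec_diagonal, Pi.star_apply, Function.comp_apply,
      RCLike.star_def]
    rw [Complex.re_sum]
    congr 1; funext i
    have h2 : (starRingEnd ℂ) (y i) * ((hH.eigenvalues i : ℂ) * y i)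
        = (hH.eigenvalues i : ℂ) * ((Complex.normSq (y i) : ℂ)) := by
      rw [show (starRingEnd ℂ) (y i) * ((hH.eigenvalues i : ℂ) * y i)
          = (hH.eigenvalues i : ℂ) * ((starRingEnd ℂ) (y i) * y i) from by ring,
        ← Complex.normSq_eq_conj_mul_self]
    have h3 : (RCLike.ofReal (hH.eigenvalues i) : ℂ) = ((hH.eigenvalues i : ℝ) : ℂ) := rfl
    rw [h3, h2, ← Complex.ofReal_mul]
    exact Complex.ofReal_re _
  rw [hkey, hdiag, ← hyy, dot_star_self_re, Finset.mul_sum]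
  exact Finset.sum_le_sum fun i _ =>
    mul_le_mul_of_nonneg_right (hc i) (Complex.normSq_nonneg _)

lemma exists_unit_eigvec {n : Type} [Fintype n] [DecidableEq n] {M : Matrix n n ℂ}
    (hM : M.IsHermitian) (i : n) :
    ∃ v : n → ℂ, M *ᵥ v = (hM.eigenvalues i : ℂ) • v ∧ star v ⬝ᵥ v = 1 := by
  refine ⟨⇑(hM.eigenvectorBasis i), ?_, ?_⟩
  · rw [hM.mulVec_eigenvectorBasis i]
    funext j
    simp [Complex.real_smul]
  · have horth := hM.eigenvectorBasis.orthonormal.1 i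
    have h1 : (inner ℂ (hM.eigenvectorBasis i) (hM.eigenvectorBasis i) : ℂ) = 1 := by
      rw [inner_self_eq_norm_sq_to_K, horth]; norm_num
    rwa [EuclideanSpace.inner_eq_star_dotProduct, dotProduct_comm] at h1

lemma dot_diag_re {ι : Type} [Fintype ι] [DecidableEq ι] (w : ι → ℝ) (v : ι → ℂ) :
    (star v ⬝ᵥ (Matrix.diagonal (fun j => (w j : ℂ)) *ᵥ v)).re
      = ∑ j, w j * Complex.normSq (v j) := by
  simp only [dotProduct, mulVec_diagonal, Pi.star_apply, RCLike.star_def]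
  rw [Complex.re_sum]
  refine Finset.sum_congr rfl fun i _ => ?_
  have h2 : (starRingEnd ℂ) (v i) * ((w i : ℂ) * v i)
      = (w i : ℂ) * ((Complex.normSq (v i) : ℂ)) := by
    rw [show (starRingEnd ℂ) (v i) * ((w i : ℂ) * v i)
        = (w i : ℂ) * ((starRingEnd ℂ) (v i) * v i) from by ring,
      ← Complex.normSq_eq_conj_mul_self]
  rw [h2, ← Complex.ofReal_mul]
  exact Complex.ofReal_re _

lemma eig_le_eigval {n : Type} [Fintype n] [DecidableEq n] {H : Matrix n n ℂ}
    (hH : H.IsHermitian) {μ : ℝ} {w : n → ℂ} (hw0 : w ≠ 0)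
    (hw : H *ᵥ w = (μ : ℂ) • w) : μ ≤ eigval hH 1 := by
  have hne : Nonempty n := by
    by_contra h
    rw [not_nonempty_iff] at h
    exact hw0 (funext fun i => absurd (Nonempty.intro i) (not_nonempty_iff.mpr h))
  have hray := rayleigh_upper hH (fun i => (eigval_spec hH hne).2 i) w
  rw [hw] at hray
  have hdot : (star w ⬝ᵥ ((μ : ℂ) • w)) = (μ : ℂ) * (star w ⬝ᵥ w) := by
    rw [dotProduct_smul, smul_eq_mul]
  rw [hdot] at hray
  have him : ((μ : ℂ) * (star w ⬝ᵥ w)).re = μ * (star w ⬝ᵥ w).re := by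
    simp [Complex.mul_re]
  rw [him] at hray
  exact le_of_mul_le_mul_right hray (dot_star_self_re_pos hw0)

lemma eigval_tms_nonneg {m n : Type} [Fintype m] [Fintype n] [DecidableEq n]
    (A : Matrix m n ℂ) : 0 ≤ eigval (Matrix.isHermitian_conjTranspose_mul_self A) 1 := by
  rcases isEmpty_or_nonempty n with h | h
  · rw [eigval_empty _ h]
  · obtain ⟨i, hi⟩ := (eigval_spec (Matrix.isHermitian_conjTranspose_mul_self A) h).1
    rw [hi]
    exact Matrix.eigenvalues_conjTranspose_mul_self_nonneg A i

lemma singval_nonneg {m n : Type} [Fintype m] [Fintype n] [DecidableEq n]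
    (M : Matrix m n ℂ) (j : ℕ) : 0 ≤ singval M j := Real.sqrt_nonneg _

lemma singval_conjTranspose_le {m n : Type} [Fintype m] [Fintype n]
    [DecidableEq m] [DecidableEq n] (A : Matrix m n ℂ) :
    singval Aᴴ 1 ≤ singval A 1 := by
  classical
  have hH' : (A * Aᴴ).IsHermitian := Matrix.isHermitian_mul_conjTranspose_self A
  have he : eigval (Matrix.isHermitian_conjTranspose_mul_self Aᴴ) 1 = eigval hH' 1 :=
    eigval_congr (by rw [conjTranspose_conjTranspose]) _ _ 1
  rw [singval, he]
  rcases isEmpty_or_nonempty m with hm | hm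
  · rw [eigval_empty _ hm, Real.sqrt_zero]
    exact singval_nonneg A 1
  · obtain ⟨i, hi⟩ := (eigval_spec hH' hm).1
    obtain ⟨v, hv, hv1⟩ := exists_unit_eigvec hH' i
    by_cases hpos : 0 < hH'.eigenvalues i
    · set w : n → ℂ := Aᴴ *ᵥ v with hwdef
      have hw : (Aᴴ * A) *ᵥ w = ((hH'.eigenvalues i : ℝ) : ℂ) • w := by
        have h3 : (Aᴴ * A) * Aᴴ = Aᴴ * (A * Aᴴ) := by rw [Matrix.mul_assoc]
        rw [hwdef, mulVec_mulVec, h3, ← mulVec_mulVec, hv, mulVec_smul]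
      have hwne : w ≠ 0 := by
        intro h0
        have h1 : (A * Aᴴ) *ᵥ v = 0 := by
          rw [← mulVec_mulVec, ← hwdef, h0, mulVec_zero]
        rw [hv] at h1
        have hv0 : v = 0 := by
          have := smul_eq_zero.mp h1
          rcases this with h | h
          · exact absurd (Complex.ofReal_eq_zero.mp h) (ne_of_gt hpos)
          · exact h
        rw [hv0] at hv1
        simp at hv1
      have hle := eig_le_eigval (Matrix.isHermitian_conjTranspose_mul_self A) hwne hw
      rw [hi]
      exact Real.sqrt_le_sqrt hle
    · rw [hi, Real.sqrt_eq_zero'.mpr (le_of_not_gt hpos)]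
      exact singval_nonneg A 1

lemma singval_diagonal_le {ι : Type} [Fintype ι] [DecidableEq ι] (w : ι → ℝ) {c : ℝ}
    (hc : 0 ≤ c) (hw : ∀ j, Complex.normSq ((w j : ℂ)) ≤ c ^ 2) :
    singval (Matrix.diagonal (fun j => (w j : ℂ))) 1 ≤ c := by
  classical
  rw [singval]
  have key : eigval (Matrix.isHermitian_conjTranspose_mul_self
      (Matrix.diagonal (fun j => (w j : ℂ)))) 1 ≤ c ^ 2 := by
    have hd : (Matrix.diagonal (fun j => (w j : ℂ)))ᴴ * Matrix.diagonal (fun j => (w j : ℂ))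
        = Matrix.diagonal (fun j => ((Complex.normSq (w j) : ℝ) : ℂ)) := by
      rw [diagonal_conjTranspose, diagonal_mul_diagonal]
      congr 1
      funext j
      simp [Pi.star_apply, RCLike.star_def, ← Complex.normSq_eq_conj_mul_self]
    have hH2 : (Matrix.diagonal (fun j => ((Complex.normSq (w j) : ℝ) : ℂ))).IsHermitian := by
      rw [← hd]; exact Matrix.isHermitian_conjTranspose_mul_self _
    rw [eigval_congr hd _ hH2 1]
    rcases isEmpty_or_nonempty ι with h | h
    · rw [eigval_empty _ h]; positivity
    · obtain ⟨i, hi⟩ := (eigval_spec hH2 h).1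
      obtain ⟨v, hv, hv1⟩ := exists_unit_eigvec hH2 i
      rw [hi]
      have h1 : (star v ⬝ᵥ (Matrix.diagonal (fun j => ((Complex.normSq (w j) : ℝ) : ℂ)) *ᵥ v)).re
          = hH2.eigenvalues i := by
        rw [hv, dotProduct_smul, smul_eq_mul, hv1, mul_one, Complex.ofReal_re]
      rw [← h1, dot_diag_re]
      have h2 : ∑ j, Complex.normSq ((w j : ℂ)) * Complex.normSq (v j)
          ≤ ∑ j, c ^ 2 * Complex.normSq (v j) :=
        Finset.sum_le_sum fun j _ =>
          mul_le_mul_of_nonneg_right (hw j) (Complex.normSq_nonneg _)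
      calc ∑ j, Complex.normSq ((w j : ℂ)) * Complex.normSq (v j)
          ≤ ∑ j, c ^ 2 * Complex.normSq (v j) := h2
        _ = c ^ 2 * (star v ⬝ᵥ v).re := by rw [← Finset.mul_sum, dot_star_self_re]
        _ = c ^ 2 := by rw [hv1]; simp
  calc Real.sqrt _ ≤ Real.sqrt (c ^ 2) := Real.sqrt_le_sqrt key
    _ = c := by rw [Real.sqrt_sq hc]

/-- A family of unitarily invariant matrix norms (one for every shape). -/
structure UINorm where
  N : ∀ {p q : Type} [Fintype p] [Fintype q] [DecidableEq p] [DecidableEq q],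
      Matrix p q ℂ → ℝ
  nonneg : ∀ {p q : Type} [Fintype p] [Fintype q] [DecidableEq p] [DecidableEq q]
      (M : Matrix p q ℂ), 0 ≤ N M
  triangle : ∀ {p q : Type} [Fintype p] [Fintype q] [DecidableEq p] [DecidableEq q]
      (M₁ M₂ : Matrix p q ℂ), N (M₁ + M₂) ≤ N M₁ + N M₂
  unitary_invariant : ∀ {p q : Type} [Fintype p] [Fintype q] [DecidableEq p] [DecidableEq q]
      (U : Matrix p p ℂ) (M : Matrix p q ℂ) (V : Matrix q q ℂ),
      U ∈ Matrix.unitaryGroup p ℂ → V ∈ Matrix.unitaryGroup q ℂ → N (U * M * V) = N M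
  spec_mul : ∀ {p q r : Type} [Fintype p] [Fintype q] [Fintype r]
      [DecidableEq p] [DecidableEq q] [DecidableEq r]
      (X : Matrix p q ℂ) (Y : Matrix q r ℂ), N (X * Y) ≤ singval X 1 * N Y
  mul_spec : ∀ {p q r : Type} [Fintype p] [Fintype q] [Fintype r]
      [DecidableEq p] [DecidableEq q] [DecidableEq r]
      (X : Matrix p q ℂ) (Y : Matrix q r ℂ), N (X * Y) ≤ N X * singval Y 1

set_option maxHeartbeats 1000000 in
/-- If Ũ₃₁ Σ_k = E₃₁ Ṽ₁₁ + E₃₂ Ṽ₂₁ + E₃₃ Ṽ₃₁ and Ũ₃₁* E₃₃ = Σ_k Ṽ₃₁*, with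
‖[Ṽ₁₁; Ṽ₂₁]‖₂ ≤ 1 and ‖E₃₃‖₂ < σ_k, then ⦀Ũ₃₁⦀ ≤ ⦀[E₃₁, E₃₂]⦀/Γ₁ for every
unitarily invariant norm, where Γ₁ = (σ_k² − ‖E₃₃‖₂²)/σ_k. -/
theorem left_angle_residual_bound
    {k p lk nl : ℕ}
    (σ : ℕ → ℝ) (hσdec : ∀ i j : ℕ, 1 ≤ i → i ≤ j → σ j ≤ σ i) (hσk : 0 < σ k)
    (U31 : Matrix (Fin p) (Fin k) ℂ)
    (V11 : Matrix (Fin k) (Fin k) ℂ) (V21 : Matrix (Fin lk) (Fin k) ℂ)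
    (V31 : Matrix (Fin nl) (Fin k) ℂ)
    (E31 : Matrix (Fin p) (Fin k) ℂ) (E32 : Matrix (Fin p) (Fin lk) ℂ)
    (E33 : Matrix (Fin p) (Fin nl) ℂ)
    (hrel1 : U31 * (Matrix.diagonal fun t : Fin k => (σ ((t : ℕ) + 1) : ℂ)) = E31 * V11 + E32 * V21 + E33 * V31)
    (hrel2 : U31ᴴ * E33 = (Matrix.diagonal fun t : Fin k => (σ ((t : ℕ) + 1) : ℂ)) * V31ᴴ)
    (hVnorm : singval (Matrix.fromRows V11 V21) 1 ≤ 1)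
    (hE33 : singval E33 1 < σ k) :
    ∀ nrm : UINorm,
      nrm.N U31 ≤ nrm.N (Matrix.fromCols E31 E32)
          / ((σ k ^ 2 - singval E33 1 ^ 2) / σ k) := by
  intro nrm
  classical
  set D : Matrix (Fin k) (Fin k) ℂ :=
    Matrix.diagonal (fun t : Fin k => (σ ((t : ℕ) + 1) : ℂ)) with hD
  set Dinv : Matrix (Fin k) (Fin k) ℂ :=
    Matrix.diagonal (fun t : Fin k => (((σ ((t : ℕ) + 1))⁻¹ : ℝ) : ℂ)) with hDinv
  set a := σ k with ha
  set s := singval E33 1 with hs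
  have hs0 : 0 ≤ s := singval_nonneg E33 1
  have ha0 : 0 < a := hσk
  have hσt : ∀ t : Fin k, a ≤ σ ((t : ℕ) + 1) := fun t =>
    hσdec ((t : ℕ) + 1) k (by omega) (by omega)
  have hσtpos : ∀ t : Fin k, 0 < σ ((t : ℕ) + 1) := fun t => lt_of_lt_of_le ha0 (hσt t)
  have hDDinv : D * Dinv = 1 := by
    rw [hD, hDinv, diagonal_mul_diagonal, ← Matrix.diagonal_one]
    have hfun : (fun i : Fin k => (σ ((i : ℕ) + 1) : ℂ) * ((((σ ((i : ℕ) + 1))⁻¹ : ℝ)) : ℂ))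
        = fun _ : Fin k => (1 : ℂ) := by
      funext i
      rw [Complex.ofReal_inv]
      exact mul_inv_cancel₀ (Complex.ofReal_ne_zero.mpr (ne_of_gt (hσtpos i)))
    rw [hfun]
  set t := singval Dinv 1 with htdef
  have ht0 : 0 ≤ t := singval_nonneg _ 1
  have hta : t ≤ a⁻¹ := by
    rw [htdef, hDinv]
    apply singval_diagonal_le _ (inv_nonneg.mpr ha0.le)
    intro j
    rw [Complex.normSq_ofReal]
    have h1 : (σ ((j : ℕ) + 1))⁻¹ ≤ a⁻¹ := inv_anti₀ ha0 (hσt j)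
    have h2 : 0 ≤ (σ ((j : ℕ) + 1))⁻¹ := inv_nonneg.mpr (hσtpos j).le
    calc (σ ((j : ℕ) + 1))⁻¹ * (σ ((j : ℕ) + 1))⁻¹ ≤ a⁻¹ * a⁻¹ :=
          mul_le_mul h1 h1 h2 (inv_nonneg.mpr ha0.le)
      _ = (a⁻¹) ^ 2 := by ring
  set x := nrm.N U31 with hx
  set f := nrm.N (Matrix.fromCols E31 E32) with hf
  have hx0 : 0 ≤ x := nrm.nonneg _
  have hf0 : 0 ≤ f := nrm.nonneg _
  -- key1
  have hU31eq : U31 = (U31 * D) * Dinv := by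
    rw [Matrix.mul_assoc, hDDinv, Matrix.mul_one]
  have key1 : x ≤ nrm.N (U31 * D) * t := by
    rw [hx]
    nth_rewrite 1 [hU31eq]
    exact nrm.mul_spec _ _
  -- key2
  have key2 : nrm.N (U31 * D) ≤ f + s * nrm.N V31 := by
    rw [hrel1, ← fromCols_mul_fromRows]
    calc nrm.N (Matrix.fromCols E31 E32 * Matrix.fromRows V11 V21 + E33 * V31)
        ≤ nrm.N (Matrix.fromCols E31 E32 * Matrix.fromRows V11 V21)
          + nrm.N (E33 * V31) := nrm.triangle _ _
      _ ≤ f * singval (Matrix.fromRows V11 V21) 1 + singval E33 1 * nrm.N V31 :=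
          add_le_add (nrm.mul_spec _ _) (nrm.spec_mul _ _)
      _ ≤ f * 1 + s * nrm.N V31 := by
          rw [hs]
          exact add_le_add (mul_le_mul_of_nonneg_left hVnorm hf0) le_rfl
      _ = f + s * nrm.N V31 := by ring
  -- key3
  have hDH : Dᴴ = D := by
    rw [hD, diagonal_conjTranspose]
    have hst : star (fun t : Fin k => (σ ((t : ℕ) + 1) : ℂ))
        = fun t : Fin k => (σ ((t : ℕ) + 1) : ℂ) := by
      funext j
      simp [Complex.conj_ofReal]
    rw [hst]
  have hV31D : V31 * D = E33ᴴ * U31 := by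
    have h := congrArg Matrix.conjTranspose hrel2
    rw [conjTranspose_mul, conjTranspose_mul, conjTranspose_conjTranspose,
      conjTranspose_conjTranspose, hDH] at h
    exact h.symm
  have key3 : nrm.N V31 ≤ (s * x) * t := by
    have hV31eq : V31 = (E33ᴴ * U31) * Dinv := by
      rw [← hV31D, Matrix.mul_assoc, hDDinv, Matrix.mul_one]
    calc nrm.N V31 = nrm.N ((E33ᴴ * U31) * Dinv) := by rw [← hV31eq]
      _ ≤ nrm.N (E33ᴴ * U31) * t := nrm.mul_spec _ _
      _ ≤ (singval E33ᴴ 1 * x) * t := by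
          exact mul_le_mul_of_nonneg_right (nrm.spec_mul _ _) ht0
      _ ≤ (s * x) * t := by
          rw [hs]
          exact mul_le_mul_of_nonneg_right
            (mul_le_mul_of_nonneg_right (singval_conjTranspose_le E33) hx0) ht0
  -- combine
  have hmain : x ≤ (f + s * ((s * x) * t)) * t := by
    calc x ≤ nrm.N (U31 * D) * t := key1
      _ ≤ (f + s * nrm.N V31) * t := mul_le_mul_of_nonneg_right key2 ht0
      _ ≤ (f + s * ((s * x) * t)) * t := by
          apply mul_le_mul_of_nonneg_right _ ht0
          exact add_le_add le_rfl (mul_le_mul_of_nonneg_left key3 hs0)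
  have hGamma : 0 < (a ^ 2 - s ^ 2) / a := by
    apply div_pos _ ha0
    nlinarith [hE33, hs0]
  have ha2 : (0:ℝ) ≤ a ^ 2 := sq_nonneg a
  rw [le_div_iff₀ hGamma, show x * ((a ^ 2 - s ^ 2) / a) = x * (a ^ 2 - s ^ 2) / a from
    (mul_div_assoc _ _ _).symm, div_le_iff₀ ha0]
  have h7 : t * a ≤ 1 := by
    calc t * a ≤ a⁻¹ * a := mul_le_mul_of_nonneg_right hta ha0.le
      _ = 1 := inv_mul_cancel₀ (ne_of_gt ha0)
  nlinarith [mul_le_mul_of_nonneg_right hmain ha2, h7,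
    mul_le_mul h7 h7 (mul_nonneg ht0 ha0.le) zero_le_one,
    hf0, hx0, hs0, ht0, ha0.le, hE33,
    mul_nonneg (mul_nonneg hs0 hs0) hx0, mul_nonneg hf0 ha0.le,
    mul_nonneg ht0 ha0.le]
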